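/- Let S and T be independent sets in a matroid. Then at least one of the following holds: (a) there is some x ∈ S with x ∉ T such that T ∪ {x} is independent; or (b) there is an injection φ: S → T such that for each x ∈ S, x ∉ T \ {φ(x)}, the set (T \ {φ(x)}) ∪ {x} is independent, and span((T \ {φ(x)}) ∪ {x}) = span(T). -/

import Mathlib

noncomputable def mrk {α : Type*} (M : Matroid α) (X : Set α) : ℕ :=
  sSup {n | ∃ I, I ⊆ X ∧ M.Indep I ∧ I.ncard = n}

/-- The span (closure) of a set: all ground set elements whose addition does not
increase the rank. -/
def mspan {α : Type*} (M : Matroid α) (X : Set α) : Set α :=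
  {x ∈ M.E | mrk M (X ∪ {x}) = mrk M X}

open Set

section Aux

variable {α : Type*} {M : Matroid α}

lemma aux_ncard_le_of_subset_closure [M.Finite] {I Y : Set α} (hI : M.Indep I)
    (hIY : I ⊆ M.closure Y) (hY : Y.Finite) : I.ncard ≤ Y.ncard := by
  obtain ⟨J, hJ⟩ := M.exists_isBasis' Y
  obtain ⟨I', hI', hII'⟩ := hI.subset_isBasis_of_subset hIY (M.closure_subset_ground Y)
  have hcard : I'.encard = J.encard := hI'.encard_eq_encard hJ.isBasis_closure_right
  have h1 : I.encard ≤ Y.encard :=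
    ((encard_le_encard hII').trans hcard.le).trans (encard_le_encard hJ.subset)
  rw [ncard_def, ncard_def]
  exact ENat.toNat_le_toNat h1 (by rwa [encard_ne_top_iff])

lemma aux_bddAbove_mrk [M.Finite] (X : Set α) :
    BddAbove {n | ∃ I, I ⊆ X ∧ M.Indep I ∧ I.ncard = n} := by
  refine ⟨M.E.ncard, ?_⟩
  rintro n ⟨I, _, hI, rfl⟩
  exact ncard_le_ncard hI.subset_ground M.ground_finite

lemma aux_mrk_eq [M.Finite] {J X : Set α} (hJ : M.IsBasis J X) : mrk M X = J.ncard := by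
  have hJfin : J.Finite := M.set_finite J hJ.indep.subset_ground
  apply le_antisymm
  · refine csSup_le ⟨0, ∅, empty_subset X, M.empty_indep, by simp⟩ ?_
    rintro n ⟨I, hIX, hI, rfl⟩
    exact aux_ncard_le_of_subset_closure hI (hIX.trans hJ.subset_closure) hJfin
  · exact le_csSup (aux_bddAbove_mrk X) ⟨J, hJ.subset, hJ.indep, rfl⟩

lemma aux_mspan_eq [M.Finite] {X : Set α} (hX : X ⊆ M.E) : mspan M X = M.closure X := by
  obtain ⟨J, hJ⟩ := M.exists_isBasis X hX
  have hJfin : J.Finite := M.set_finite J hJ.indep.subset_ground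
  ext x
  simp only [mspan, mem_setOf_eq]
  constructor
  · rintro ⟨hxE, hrk⟩
    by_contra hxcl
    have hxJ : x ∉ J := fun h => hxcl (M.mem_closure_of_mem (hJ.subset h) hX)
    have hind : M.Indep (insert x J) := by
      rw [hJ.indep.insert_indep_iff_of_notMem hxJ]
      exact ⟨hxE, fun h => hxcl (hJ.closure_eq_closure ▸ h)⟩
    have hle : (insert x J).ncard ≤ mrk M (X ∪ {x}) := by
      refine le_csSup (aux_bddAbove_mrk _) ⟨insert x J, ?_, hind, rfl⟩
      exact insert_subset (by simp) (hJ.subset.trans subset_union_left)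
    rw [hrk, aux_mrk_eq hJ, ncard_insert_of_notMem hxJ hJfin] at hle
    omega
  · intro hxcl
    have hxE : x ∈ M.E := M.mem_ground_of_mem_closure hxcl
    refine ⟨hxE, ?_⟩
    have hJ' : M.IsBasis J (X ∪ {x}) := by
      refine hJ.indep.isBasis_of_subset_of_subset_closure
        (hJ.subset.trans subset_union_left) ?_
      rw [union_subset_iff]
      refine ⟨hJ.subset_closure, by simpa [hJ.closure_eq_closure] using hxcl⟩
    rw [aux_mrk_eq hJ', aux_mrk_eq hJ]

lemma aux_closure_exchange_eq {T : Set α} {x e : α} (hT : M.Indep T) (hx : x ∈ M.closure T)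
    (hxT : x ∉ T) (heT : e ∈ T) (hind : M.Indep (insert x (T \ {e}))) :
    M.closure (insert x (T \ {e})) = M.closure T := by
  apply subset_antisymm
  · apply M.closure_subset_closure_of_subset_closure
    exact insert_subset hx (diff_subset.trans (M.subset_closure T hT.subset_ground))
  · have hecl : e ∈ M.closure (insert x (T \ {e})) := by
      by_contra hecl
      have hfI : e ∉ insert x (T \ {e}) := by
        rintro (h | h)
        · exact hxT (h ▸ heT)
        · exact h.2 rfl
      have hind2 : M.Indep (insert e (insert x (T \ {e}))) := by
        rw [hind.insert_indep_iff_of_notMem hfI]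
        exact ⟨hT.subset_ground heT, hecl⟩
      have heq : insert e (insert x (T \ {e})) = insert x T := by
        rw [insert_comm, insert_diff_singleton, insert_eq_self.2 heT]
      rw [heq] at hind2
      exact ((hT.insert_dep_iff).2 ⟨hx, hxT⟩).not_indep hind2
    apply M.closure_subset_closure_of_subset_closure
    intro g hg
    by_cases hge : g = e
    · exact hge ▸ hecl
    · exact M.mem_closure_of_mem (mem_insert_iff.2 (Or.inr ⟨hg, hge⟩)) hind.subset_ground

lemma aux_mem_closure_exchange_set [M.Finite] {T : Set α} {x : α} (hT : M.Indep T)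
    (hx : x ∈ M.closure T) (hxT : x ∉ T) :
    x ∈ M.closure {e | e ∈ T ∧ M.Indep (insert x (T \ {e}))} := by
  have hxE : x ∈ M.E := M.mem_ground_of_mem_closure hx
  have hTfin : T.Finite := M.set_finite T hT.subset_ground
  have hne : ({n | ∃ J, J ⊆ T ∧ x ∈ M.closure J ∧ J.ncard = n} : Set ℕ).Nonempty :=
    ⟨T.ncard, T, Subset.rfl, hx, rfl⟩
  obtain ⟨J, hJT, hxJ, hJcard⟩ := Nat.sInf_mem hne
  have hmin : ∀ J', J' ⊆ T → x ∈ M.closure J' → J.ncard ≤ J'.ncard := fun J' h1 h2 =>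
    hJcard ▸ Nat.sInf_le ⟨J', h1, h2, rfl⟩
  have hJsub : J ⊆ {e | e ∈ T ∧ M.Indep (insert x (T \ {e}))} := by
    intro e heJ
    refine ⟨hJT heJ, ?_⟩
    by_contra hne'
    have hxTe : x ∈ M.closure (T \ {e}) := by
      have h1 : x ∉ T \ {e} := fun h => hxT h.1
      rw [(hT.diff {e}).insert_indep_iff_of_notMem h1] at hne'
      simp only [mem_diff, hxE, true_and, not_not] at hne'
      exact hne'
    have hxJe : x ∉ M.closure (J \ {e}) := by
      intro hmem
      have h2 := hmin _ (diff_subset.trans hJT) hmem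
      have hlt : (J \ {e}).ncard < J.ncard :=
        ncard_diff_singleton_lt_of_mem heJ (hTfin.subset hJT)
      omega
    have hexch : e ∈ M.closure (insert x (J \ {e})) := by
      have h1 : x ∈ M.closure (insert e (J \ {e})) \ M.closure (J \ {e}) := by
        rw [insert_diff_singleton, insert_eq_self.2 heJ]
        exact ⟨hxJ, hxJe⟩
      exact (Matroid.closure_exchange h1).1
    have hcontra : e ∈ M.closure (T \ {e}) := by
      have hsub : insert x (J \ {e}) ⊆ insert x (T \ {e}) :=
        insert_subset_insert (diff_subset_diff_left hJT)
      have h3 := (M.closure_subset_closure hsub) hexch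
      rwa [Matroid.closure_insert_eq_of_mem_closure hxTe] at h3
    exact hT.notMem_closure_diff_of_mem (hJT heJ) hcontra
  exact M.closure_subset_closure hJsub hxJ

end Aux

/-- For independent sets `S` and `T` in a matroid, either some `x ∈ S \ T`
can be added to `T` keeping independence, or there is an injection `φ : S → T` such that
`(T \ {φ x}) ∪ {x}` is independent with the same span as `T` for every `x ∈ S`. -/
theorem stmt2 {α : Type*} (M : Matroid α) [M.Finite] (S T : Set α)
    (hS : M.Indep S) (hT : M.Indep T) :
    (∃ x ∈ S, x ∉ T ∧ M.Indep (insert x T)) ∨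
    (∃ φ : α → α, Set.InjOn φ S ∧ Set.MapsTo φ S T ∧
      ∀ x ∈ S, x ∉ T \ {φ x} ∧ M.Indep (insert x (T \ {φ x})) ∧
        mspan M (insert x (T \ {φ x})) = mspan M T) := by
  classical
  by_cases hcase : ∃ x ∈ S, x ∉ T ∧ M.Indep (insert x T)
  · exact Or.inl hcase
  right
  push_neg at hcase
  have hScl : ∀ x ∈ S, x ∈ M.closure T := by
    intro x hx
    by_cases hxT : x ∈ T
    · exact M.mem_closure_of_mem hxT hT.subset_ground
    · by_contra hcl
      exact hcase x hx hxT ((hT.insert_indep_iff_of_notMem hxT).2 ⟨hS.subset_ground hx, hcl⟩)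
  have hSfin : S.Finite := M.set_finite S hS.subset_ground
  have hTfin : T.Finite := M.set_finite T hT.subset_ground
  set D : α → Set α := fun x => {e | e ∈ T ∧ e ∉ S ∧ M.Indep (insert x (T \ {e}))} with hD
  have hDfin : ∀ x, (D x).Finite := fun x => hTfin.subset (fun e he => he.1)
  have hkey : ∀ x ∈ S \ T, x ∈ M.closure (D x ∪ (S ∩ T)) := by
    intro x hx
    have h1 := aux_mem_closure_exchange_set hT (hScl x hx.1) hx.2
    refine M.closure_subset_closure ?_ h1
    intro e he
    by_cases heS : e ∈ S
    · exact Or.inr ⟨heS, he.1⟩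
    · exact Or.inl ⟨he.1, heS, he.2⟩
  haveI : Fintype ↥(S \ T) := (hSfin.diff (t := T)).fintype
  set t : ↥(S \ T) → Finset α := fun x => (hDfin ↑x).toFinset with ht
  have hall : ∀ s : Finset ↥(S \ T), s.card ≤ (s.biUnion t).card := by
    intro s
    set A : Set α := ↑(s.image (fun x : ↥(S \ T) => (x : α))) with hA
    set N : Set α := ↑(s.biUnion t) with hN
    have hNfin : N.Finite := (s.biUnion t).finite_toSet
    have hNT : N ⊆ T := by
      intro e he
      simp only [hN, Finset.coe_biUnion, mem_iUnion] at he
      obtain ⟨x, -, hx⟩ := he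
      simp only [ht, Finset.mem_coe, Set.Finite.mem_toFinset] at hx
      exact hx.1
    have hNS : Disjoint N S := by
      rw [disjoint_left]
      intro e he heS
      simp only [hN, Finset.coe_biUnion, mem_iUnion] at he
      obtain ⟨x, -, hx⟩ := he
      simp only [ht, Finset.mem_coe, Set.Finite.mem_toFinset] at hx
      exact hx.2.1 heS
    have hAS : A ⊆ S \ T := by
      intro a ha
      simp only [hA, Finset.coe_image, mem_image, Finset.mem_coe] at ha
      obtain ⟨x, _, rfl⟩ := ha
      exact x.2
    have hind : M.Indep (A ∪ (S ∩ T)) :=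
      hS.subset (union_subset (fun a ha => (hAS ha).1) inter_subset_left)
    have hground : N ∪ (S ∩ T) ⊆ M.E :=
      (union_subset hNT inter_subset_right).trans hT.subset_ground
    have hsubcl : A ∪ (S ∩ T) ⊆ M.closure (N ∪ (S ∩ T)) := by
      rintro a (haA | haST)
      · have h2 := hkey a (hAS haA)
        refine M.closure_subset_closure (union_subset_union_left _ ?_) h2
        intro e he
        simp only [hN, Finset.coe_biUnion, mem_iUnion]
        simp only [hA, Finset.coe_image, mem_image, Finset.mem_coe] at haA
        obtain ⟨x, hxs, rfl⟩ := haA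
        exact ⟨x, by simpa using hxs, by simpa [ht, Set.Finite.mem_toFinset] using he⟩
      · exact M.mem_closure_of_mem (Or.inr haST) hground
    have hcard := aux_ncard_le_of_subset_closure hind hsubcl
      (hNfin.union (hSfin.inter_of_left T))
    have hdisjA : Disjoint A (S ∩ T) :=
      Disjoint.mono hAS inter_subset_right disjoint_sdiff_left
    have hAfin : A.Finite := (s.image _).finite_toSet
    have hSTfin : (S ∩ T).Finite := hSfin.inter_of_left T
    rw [ncard_union_eq hdisjA hAfin hSTfin] at hcard
    have hcard2 : (N ∪ (S ∩ T)).ncard ≤ N.ncard + (S ∩ T).ncard :=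
      ncard_union_le N (S ∩ T)
    have hAcard : A.ncard = s.card := by
      rw [hA, ncard_coe_finset, Finset.card_image_of_injective _ Subtype.val_injective]
    have hNcard : N.ncard = (s.biUnion t).card := by rw [hN, ncard_coe_finset]
    omega
  obtain ⟨f, hfinj, hft⟩ := (Finset.all_card_le_biUnion_card_iff_exists_injective t).1 hall
  have hfD : ∀ x : ↥(S \ T), (f x) ∈ D ↑x := by
    intro x
    have := hft x
    simpa [ht, Set.Finite.mem_toFinset] using this
  set φ : α → α := fun a => if h : a ∈ S \ T then f ⟨a, h⟩ else a with hφ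
  have hφdiff : ∀ a (h : a ∈ S \ T), φ a = f ⟨a, h⟩ := fun a h => dif_pos h
  have hφmem : ∀ a ∈ S, a ∈ T → φ a = a := fun a _ haT => dif_neg (fun h => h.2 haT)
  refine ⟨φ, ?_, ?_, ?_⟩
  · -- InjOn
    intro x hxS y hyS hxy
    by_cases hx : x ∈ S \ T <;> by_cases hy : y ∈ S \ T
    · rw [hφdiff x hx, hφdiff y hy] at hxy
      exact congrArg Subtype.val (hfinj hxy)
    · have hyT : y ∈ T := by_contra fun h => hy ⟨hyS, h⟩
      rw [hφdiff x hx, hφmem y hyS hyT] at hxy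
      exact absurd (hxy ▸ hyS) (hfD ⟨x, hx⟩).2.1
    · have hxT : x ∈ T := by_contra fun h => hx ⟨hxS, h⟩
      rw [hφmem x hxS hxT, hφdiff y hy] at hxy
      exact absurd (hxy ▸ hxS) (hfD ⟨y, hy⟩).2.1
    · have hyT : y ∈ T := by_contra fun h => hy ⟨hyS, h⟩
      have hxT : x ∈ T := by_contra fun h => hx ⟨hxS, h⟩
      rwa [hφmem x hxS hxT, hφmem y hyS hyT] at hxy
  · -- MapsTo
    intro x hxS
    by_cases hx : x ∈ S \ T
    · rw [hφdiff x hx]; exact (hfD ⟨x, hx⟩).1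
    · have hxT : x ∈ T := by_contra fun h => hx ⟨hxS, h⟩
      rw [hφmem x hxS hxT]; exact hxT
  · -- per-element conditions
    intro x hxS
    by_cases hx : x ∈ S \ T
    · rw [hφdiff x hx]
      obtain ⟨heT, -, hind⟩ := hfD ⟨x, hx⟩
      refine ⟨fun h => hx.2 h.1, hind, ?_⟩
      have hsub1 : insert x (T \ {f ⟨x, hx⟩}) ⊆ M.E := hind.subset_ground
      rw [aux_mspan_eq hsub1, aux_mspan_eq hT.subset_ground]
      exact aux_closure_exchange_eq hT (hScl x hxS) hx.2 heT hind
    · have hxT : x ∈ T := by_contra fun h => hx ⟨hxS, h⟩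
      rw [hφmem x hxS hxT]
      have heq : insert x (T \ {x}) = T := by
        rw [insert_diff_singleton, insert_eq_self.2 hxT]
      rw [heq]
      exact ⟨fun h => h.2 rfl, hT, rfl⟩
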